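/- For a composition $\alpha\in(\mathbb{Z}_{\geq 0})^n$ with non-increasing rearrangement $\alpha^+$, define $n(\alpha) := \sum_{s\in\alpha} l(s)$ where for a cell $s=(i,j)$ of the diagram of $\alpha$ the leg is $l(s) := \#\{k>i : j\leq \alpha_k\leq\alpha_i\} + \#\{k<i : j\leq \alpha_k+1\leq\alpha_i\}$. Then $n(\alpha) = n(\alpha^+) + \binom{n}{2} - I(\alpha)$, where $I(\alpha) = \#\{(i,j): i<j,\ \alpha_i\geq\alpha_j\}$. -/

import Mathlib

open Finset

/-- `n(α) = ∑_{s∈α} l(s)`: for a cell `s = (i,j)` of the diagram of `α`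
(`1 ≤ j ≤ α_i`, here `j` runs through `Finset.range (α i)` and represents the
1-based column `j+1`), the leg is
`l(s) = #{k>i : j ≤ α_k ≤ α_i} + #{k<i : j ≤ α_k + 1 ≤ α_i}`. -/
def legSum {n : ℕ} (α : Fin n → ℕ) : ℕ :=
  ∑ i : Fin n, ∑ j ∈ Finset.range (α i),
    (((univ : Finset (Fin n)).filter
        (fun k => i < k ∧ j + 1 ≤ α k ∧ α k ≤ α i)).card +
     ((univ : Finset (Fin n)).filter
        (fun k => k < i ∧ j + 1 ≤ α k + 1 ∧ α k + 1 ≤ α i)).card)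

private lemma count_lt {a b : ℕ} (h : b ≤ a) :
    ∑ j ∈ range a, (if j + 1 ≤ b then (1:ℕ) else 0) = b := by
  rw [← Finset.card_filter]
  have : (range a).filter (fun j => j + 1 ≤ b) = range b := by
    ext j; simp only [mem_filter, mem_range]; omega
  rw [this, card_range]

private def pairSum {n : ℕ} (α : Fin n → ℕ) : ℕ :=
  ∑ p ∈ (univ : Finset (Fin n × Fin n)).filter (fun p => p.1 < p.2),
    min (α p.1) (α p.2)

private lemma legSum_eq {n : ℕ} (α : Fin n → ℕ) :
    legSum α = pairSum α +
      ((univ : Finset (Fin n × Fin n)).filter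
        (fun p => p.1 < p.2 ∧ α p.1 < α p.2)).card := by
  have step1 : legSum α = ∑ i : Fin n, ∑ k : Fin n,
      ((if i < k ∧ α k ≤ α i then α k else 0) +
       (if k < i ∧ α k + 1 ≤ α i then α k + 1 else 0)) := by
    unfold legSum
    refine Finset.sum_congr rfl fun i _ => ?_
    rw [Finset.sum_add_distrib, Finset.sum_add_distrib]
    congr 1
    · calc ∑ j ∈ range (α i), (((univ : Finset (Fin n)).filter
            (fun k => i < k ∧ j + 1 ≤ α k ∧ α k ≤ α i)).card)
          = ∑ j ∈ range (α i), ∑ k : Fin n,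
              (if i < k ∧ j + 1 ≤ α k ∧ α k ≤ α i then 1 else 0) :=
            Finset.sum_congr rfl fun j _ => Finset.card_filter _ _
        _ = ∑ k : Fin n, ∑ j ∈ range (α i),
              (if i < k ∧ j + 1 ≤ α k ∧ α k ≤ α i then 1 else 0) :=
            Finset.sum_comm
        _ = ∑ k : Fin n, (if i < k ∧ α k ≤ α i then α k else 0) := by
            refine Finset.sum_congr rfl fun k _ => ?_
            by_cases h : i < k ∧ α k ≤ α i
            · rw [if_pos h]
              have e : ∀ j ∈ range (α i),
                  (if i < k ∧ j + 1 ≤ α k ∧ α k ≤ α i then (1:ℕ) else 0)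
                    = (if j + 1 ≤ α k then 1 else 0) := by
                intro j _
                by_cases hj : j + 1 ≤ α k
                · rw [if_pos ⟨h.1, hj, h.2⟩, if_pos hj]
                · rw [if_neg (by tauto), if_neg hj]
              rw [Finset.sum_congr rfl e, count_lt h.2]
            · rw [if_neg h, Finset.sum_eq_zero]
              intro j _
              rw [if_neg]; tauto
    · calc ∑ j ∈ range (α i), (((univ : Finset (Fin n)).filter
            (fun k => k < i ∧ j + 1 ≤ α k + 1 ∧ α k + 1 ≤ α i)).card)
          = ∑ j ∈ range (α i), ∑ k : Fin n,
              (if k < i ∧ j + 1 ≤ α k + 1 ∧ α k + 1 ≤ α i then 1 else 0) :=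
            Finset.sum_congr rfl fun j _ => Finset.card_filter _ _
        _ = ∑ k : Fin n, ∑ j ∈ range (α i),
              (if k < i ∧ j + 1 ≤ α k + 1 ∧ α k + 1 ≤ α i then 1 else 0) :=
            Finset.sum_comm
        _ = ∑ k : Fin n, (if k < i ∧ α k + 1 ≤ α i then α k + 1 else 0) := by
            refine Finset.sum_congr rfl fun k _ => ?_
            by_cases h : k < i ∧ α k + 1 ≤ α i
            · rw [if_pos h]
              have e : ∀ j ∈ range (α i),
                  (if k < i ∧ j + 1 ≤ α k + 1 ∧ α k + 1 ≤ α i then (1:ℕ) else 0)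
                    = (if j + 1 ≤ α k + 1 then 1 else 0) := by
                intro j _
                by_cases hj : j + 1 ≤ α k + 1
                · rw [if_pos ⟨h.1, hj, h.2⟩, if_pos hj]
                · rw [if_neg (by tauto), if_neg hj]
              rw [Finset.sum_congr rfl e, count_lt h.2]
            · rw [if_neg h, Finset.sum_eq_zero]
              intro j _
              rw [if_neg]; tauto
  have hA : (∑ p : Fin n × Fin n, (if p.1 < p.2 ∧ α p.2 ≤ α p.1 then α p.2 else 0))
      = ∑ p ∈ (univ : Finset (Fin n × Fin n)).filter (fun p => p.1 < p.2),
          (if α p.2 ≤ α p.1 then α p.2 else 0) := by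
    rw [Finset.sum_filter]
    refine Finset.sum_congr rfl fun p _ => ?_
    by_cases h1 : p.1 < p.2 <;> by_cases h2 : α p.2 ≤ α p.1 <;> simp [h1, h2]
  have hB : (∑ p : Fin n × Fin n, (if p.2 < p.1 ∧ α p.2 + 1 ≤ α p.1 then α p.2 + 1 else 0))
      = ∑ p ∈ (univ : Finset (Fin n × Fin n)).filter (fun p => p.1 < p.2),
          (if α p.1 + 1 ≤ α p.2 then α p.1 + 1 else 0) := by
    rw [Finset.sum_filter]
    rw [← Equiv.sum_comp (Equiv.prodComm (Fin n) (Fin n))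
      (fun p : Fin n × Fin n => if p.1 < p.2 then (if α p.1 + 1 ≤ α p.2 then α p.1 + 1 else 0) else 0)]
    refine Finset.sum_congr rfl fun p _ => ?_
    simp only [Equiv.prodComm_apply, Prod.fst_swap, Prod.snd_swap]
    by_cases h1 : p.2 < p.1 <;> by_cases h2 : α p.2 + 1 ≤ α p.1 <;> simp [h1, h2]
  have hC : ((univ : Finset (Fin n × Fin n)).filter
        (fun p => p.1 < p.2 ∧ α p.1 < α p.2)).card
      = ∑ p ∈ (univ : Finset (Fin n × Fin n)).filter (fun p => p.1 < p.2),
          (if α p.1 < α p.2 then 1 else 0) := by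
    rw [← Finset.filter_filter, Finset.card_filter]
  rw [step1, ← Finset.sum_product', Finset.univ_product_univ, Finset.sum_add_distrib,
    hA, hB, hC, pairSum, ← Finset.sum_add_distrib, ← Finset.sum_add_distrib]
  refine Finset.sum_congr rfl fun p hp => ?_
  simp only [mem_filter] at hp
  rcases le_or_gt (α p.2) (α p.1) with h2 | h2
  · rw [if_pos h2, if_neg (by omega), if_neg (by omega), min_eq_right h2]
  · rw [if_neg (by omega), if_pos (by omega), if_pos h2, min_eq_left (by omega)]
    omega

private lemma pairSum_perm {n : ℕ} (α : Fin n → ℕ) (σ : Equiv.Perm (Fin n)) :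
    pairSum (fun i => α (σ i)) = pairSum α := by
  unfold pairSum
  refine Finset.sum_nbij' (i := fun p : Fin n × Fin n =>
      if σ p.1 < σ p.2 then (σ p.1, σ p.2) else (σ p.2, σ p.1))
    (j := fun p : Fin n × Fin n =>
      if σ⁻¹ p.1 < σ⁻¹ p.2 then (σ⁻¹ p.1, σ⁻¹ p.2) else (σ⁻¹ p.2, σ⁻¹ p.1))
    ?_ ?_ ?_ ?_ ?_
  · intro p hp
    simp only [mem_filter, mem_univ, true_and] at hp ⊢
    have hne : σ p.1 ≠ σ p.2 := fun h => absurd (σ.injective h ▸ hp) (lt_irrefl _)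
    by_cases h : σ p.1 < σ p.2
    · rw [if_pos h]; exact h
    · rw [if_neg h]; exact lt_of_le_of_ne (not_lt.mp h) (Ne.symm hne)
  · intro p hp
    simp only [mem_filter, mem_univ, true_and] at hp ⊢
    have hne : σ⁻¹ p.1 ≠ σ⁻¹ p.2 := fun h => absurd (σ⁻¹.injective h ▸ hp) (lt_irrefl _)
    by_cases h : σ⁻¹ p.1 < σ⁻¹ p.2
    · rw [if_pos h]; exact h
    · rw [if_neg h]; exact lt_of_le_of_ne (not_lt.mp h) (Ne.symm hne)
  · intro p hp
    simp only [mem_filter, mem_univ, true_and] at hp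
    by_cases h : σ p.1 < σ p.2
    · simp [h, hp]
    · simp [h, hp.asymm]
  · intro p hp
    simp only [mem_filter, mem_univ, true_and] at hp
    by_cases h : σ⁻¹ p.1 < σ⁻¹ p.2
    · simp only [Equiv.Perm.inv_def] at h; simp [h, hp]
    · simp only [Equiv.Perm.inv_def] at h; simp [h, hp.asymm]
  · intro p hp
    by_cases h : σ p.1 < σ p.2 <;> simp [h, min_comm]

private lemma card_lt_pairs (n : ℕ) :
    ((univ : Finset (Fin n × Fin n)).filter (fun p => p.1 < p.2)).card
      = n.choose 2 := by
  rw [Finset.card_filter, ← Finset.univ_product_univ, Finset.sum_product_right]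
  have key : ∀ k : Fin n, (∑ i : Fin n, if i < k then (1:ℕ) else 0) = (k : ℕ) := by
    intro k
    rw [← Finset.card_filter]
    have : (univ : Finset (Fin n)).filter (fun i => i < k) = Finset.Iio k := by
      ext i; simp
    rw [this, Fin.card_Iio]
  simp only [key]
  rw [Fin.sum_univ_eq_sum_range (fun i => (i:ℕ)) n, Finset.sum_range_id, Nat.choose_two_right]

/-- `n(α) = n(α⁺) + C(n,2) - I(α)`, where `α⁺` (given by a permutation `σ` of
the parts yielding a weakly decreasing tuple) is the non-increasing
rearrangement of `α` and `I(α) = #{(i,j) : i<j, α_i ≥ α_j}`. -/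
theorem stmt17 {n : ℕ} (α : Fin n → ℕ) (σ : Equiv.Perm (Fin n))
    (hσ : Antitone fun i => α (σ i)) :
    legSum α = legSum (fun i => α (σ i)) + n.choose 2 -
      ((univ : Finset (Fin n × Fin n)).filter
        (fun p => p.1 < p.2 ∧ α p.2 ≤ α p.1)).card := by
  have h1 := legSum_eq α
  have h2 := legSum_eq (fun i => α (σ i))
  have h3 : ((univ : Finset (Fin n × Fin n)).filter
      (fun p => p.1 < p.2 ∧ α (σ p.1) < α (σ p.2))).card = 0 := by
    rw [Finset.card_eq_zero, Finset.filter_eq_empty_iff]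
    rintro p _ ⟨hlt, hαlt⟩
    exact absurd (hσ hlt.le) (not_le.mpr hαlt)
  have h4 : ((univ : Finset (Fin n × Fin n)).filter
        (fun p => p.1 < p.2 ∧ α p.2 ≤ α p.1)).card +
      ((univ : Finset (Fin n × Fin n)).filter
        (fun p => p.1 < p.2 ∧ α p.1 < α p.2)).card = n.choose 2 := by
    rw [← card_lt_pairs n, ← Finset.filter_filter, ← Finset.filter_filter]
    have := Finset.card_filter_add_card_filter_not
      (s := (univ : Finset (Fin n × Fin n)).filter (fun p => p.1 < p.2))
      (p := fun p => α p.2 ≤ α p.1)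
    rw [← this]
    congr 2
    ext p
    simp [not_le]
  have h5 := pairSum_perm α σ
  rw [h1, h2, h3, h5]
  omega
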